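/- arXiv:2412.13993 — 2 statements merged into one kernel-verified Lean document; each statement's English description precedes it below -/
import Mathlib

section
/- Let α ∈ (0,1), e₁,…,e_N nonnegative reals with mean ē and population standard deviation σ, and suppose α·ē + (1−α)·σ ≤ ε. Then max_i eᵢ ≤ ε·(1/α + sqrt(N−1)/(1−α)). -/
theorem stmt_5 (N : ℕ) (hN : 1 ≤ N) (α ε : ℝ) (hα0 : 0 < α) (hα1 : α < 1)
    (e : Fin N → ℝ) (he : ∀ i, 0 ≤ e i)
    (hL : α * ((∑ j, e j) / N) +
        (1 - α) * Real.sqrt ((∑ i, (e i - (∑ j, e j) / N) ^ 2) / N) ≤ ε) :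
    ∀ i, e i ≤ ε * (1 / α + Real.sqrt ((N : ℝ) - 1) / (1 - α)) := by
  intro i
  have hNpos : (0:ℝ) < N := by exact_mod_cast hN
  set m : ℝ := (∑ j, e j) / N with hm
  set S : ℝ := ∑ i, (e i - m) ^ 2 with hS
  set σ : ℝ := Real.sqrt (S / N) with hσ
  have hSnn : 0 ≤ S := Finset.sum_nonneg fun j _ => sq_nonneg _
  have hσnn : 0 ≤ σ := Real.sqrt_nonneg _
  have hmnn : 0 ≤ m := by
    apply div_nonneg _ hNpos.le
    exact Finset.sum_nonneg fun j _ => he j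
  have h1α : 0 < 1 - α := by linarith
  have hε : 0 ≤ ε := le_trans (by positivity) hL
  have hmε : m ≤ ε / α := by
    rw [le_div_iff₀ hα0]
    nlinarith [mul_nonneg h1α.le hσnn]
  have hσε : σ ≤ ε / (1 - α) := by
    rw [le_div_iff₀ h1α]
    nlinarith [mul_nonneg hα0.le hmnn]
  -- Samuelson: (e i - m)^2 ≤ (N-1) * (S/N)
  have hsum0 : ∑ j, (e j - m) = 0 := by
    simp [Finset.sum_sub_distrib, hm]
    field_simp
    simp
  have hkey : (e i - m) ^ 2 ≤ ((N:ℝ) - 1) * (S / N) := by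
    have hd : e i - m = -(∑ j ∈ Finset.univ.erase i, (e j - m)) := by
      have := Finset.add_sum_erase Finset.univ (fun j => e j - m) (Finset.mem_univ i)
      rw [hsum0] at this
      linarith
    have hcs : (∑ j ∈ Finset.univ.erase i, (e j - m)) ^ 2 ≤
        (Finset.univ.erase i).card * ∑ j ∈ Finset.univ.erase i, (e j - m) ^ 2 :=
      sq_sum_le_card_mul_sum_sq
    have hcard : ((Finset.univ.erase i).card : ℝ) = (N : ℝ) - 1 := by
      rw [Finset.card_erase_of_mem (Finset.mem_univ i)]
      simp
      rw [Nat.cast_sub hN]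
      simp
    have hrest : ∑ j ∈ Finset.univ.erase i, (e j - m) ^ 2 = S - (e i - m) ^ 2 := by
      rw [hS]
      rw [← Finset.add_sum_erase Finset.univ (fun j => (e j - m)^2) (Finset.mem_univ i)]
      ring
    have h2 : ((N:ℝ) - 1) * (S - (e i - m)^2) ≥ (∑ j ∈ Finset.univ.erase i, (e j - m)) ^ 2 := by
      rw [← hrest, ← hcard]; exact_mod_cast hcs
    have hN1 : (0:ℝ) ≤ (N:ℝ) - 1 := by
      have : (1:ℝ) ≤ N := by exact_mod_cast hN
      linarith
    have hq : (∑ j ∈ Finset.univ.erase i, (e j - m)) ^ 2 = (e i - m) ^ 2 := by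
      rw [hd]; ring
    rw [hq] at h2
    rw [ge_iff_le, ← sub_nonneg] at h2
    rw [mul_div_assoc', le_div_iff₀ hNpos]
    nlinarith [h2, sq_nonneg (e i - m)]
  have hσ2 : σ ^ 2 = S / N := Real.sq_sqrt (by positivity)
  have hN1 : (0:ℝ) ≤ (N:ℝ) - 1 := by
    have : (1:ℝ) ≤ N := by exact_mod_cast hN
    linarith
  have hstep : e i - m ≤ Real.sqrt ((N:ℝ) - 1) * σ := by
    have : (e i - m) ^ 2 ≤ (Real.sqrt ((N:ℝ) - 1) * σ) ^ 2 := by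
      rw [mul_pow, Real.sq_sqrt hN1, hσ2]; exact hkey
    nlinarith [Real.sqrt_nonneg ((N:ℝ)-1), hσnn, abs_le_abs (le_refl (e i - m)),
      sq_abs (e i - m), le_abs_self (e i - m), mul_nonneg (Real.sqrt_nonneg ((N:ℝ)-1)) hσnn]
  have hfin : e i ≤ ε / α + Real.sqrt ((N:ℝ) - 1) * (ε / (1 - α)) := by
    have := mul_le_mul_of_nonneg_left hσε (Real.sqrt_nonneg ((N:ℝ)-1))
    linarith
  have : ε * (1 / α + Real.sqrt ((N : ℝ) - 1) / (1 - α)) =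
      ε / α + Real.sqrt ((N:ℝ) - 1) * (ε / (1 - α)) := by ring
  linarith
end

section
/- For reals e₁,…,e_N with mean ē and population standard deviation σ, one has ē + σ/sqrt(N−1) ≤ max_i eᵢ (for N ≥ 2, unless all eᵢ are equal, in which case equality holds with σ = 0). -/
lemma samuelson_aux (N : ℕ) (hN : 2 ≤ N) (e : Fin N → ℝ)
    (hne : (Finset.univ : Finset (Fin N)).Nonempty) :
    (∑ j, e j) / N +
      Real.sqrt ((∑ i, (e i - (∑ j, e j) / N) ^ 2) / N) / Real.sqrt ((N : ℝ) - 1) ≤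
    Finset.univ.sup' hne e := by
  have hN1 : (1:ℝ) ≤ (N:ℝ) - 1 := by
    have : (2:ℝ) ≤ N := by exact_mod_cast hN
    linarith
  have hNpos : (0:ℝ) < N := by positivity
  set m : ℝ := (∑ j, e j) / N with hm
  set M : ℝ := Finset.univ.sup' hne e with hM
  set d : ℝ := M - m with hd
  have hle : ∀ i, e i ≤ M := fun i => Finset.le_sup' e (Finset.mem_univ i)
  have hcard : (Finset.univ : Finset (Fin N)).card = N := by simp
  have hsum0 : ∑ i, (e i - m) = 0 := by
    rw [Finset.sum_sub_distrib, Finset.sum_const, hcard, hm, nsmul_eq_mul]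
    field_simp
    ring
  have hd0 : 0 ≤ d := by
    have h1 : (∑ j, e j) ≤ N * M := by
      calc (∑ j, e j) ≤ ∑ _j : Fin N, M := Finset.sum_le_sum (fun j _ => hle j)
        _ = N * M := by rw [Finset.sum_const, hcard, nsmul_eq_mul]
    have : m ≤ M := by
      rw [hm, div_le_iff₀ hNpos]; linarith
    linarith
  have hgei : ∀ i, -(((N:ℝ) - 1) * d) ≤ e i - m := by
    intro i
    have hcard' : ((Finset.univ.erase i).card : ℝ) = (N:ℝ) - 1 := by
      rw [Finset.card_erase_of_mem (Finset.mem_univ i), hcard]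
      have : 1 ≤ N := by omega
      push_cast [Nat.cast_sub this]
      ring
    have h1 : ∑ j ∈ Finset.univ.erase i, (e j - m) ≤ ((N:ℝ) - 1) * d := by
      calc ∑ j ∈ Finset.univ.erase i, (e j - m)
          ≤ ∑ _j ∈ Finset.univ.erase i, d :=
            Finset.sum_le_sum (fun j _ => by have := hle j; simp only [hd]; linarith)
        _ = ((Finset.univ.erase i).card : ℝ) * d := by rw [Finset.sum_const, nsmul_eq_mul]
        _ = ((N:ℝ) - 1) * d := by rw [hcard']
    have h2 : (fun j => e j - m) i + ∑ j ∈ Finset.univ.erase i, (e j - m) =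
        ∑ j, (e j - m) := Finset.add_sum_erase _ (fun j => e j - m) (Finset.mem_univ i)
    simp only [] at h2
    rw [hsum0] at h2
    linarith
  have hsumsq : ∑ i, (e i - m) ^ 2 ≤ (N:ℝ) * (((N:ℝ) - 1) * d ^ 2) := by
    have key : ∀ i ∈ Finset.univ, (e i - m) ^ 2 ≤
        ((N:ℝ) - 1) * d ^ 2 - ((N:ℝ) - 2) * d * (e i - m) := by
      intro i _
      have h1 : e i - m ≤ d := by have := hle i; simp only [hd]; linarith
      have h2 := hgei i
      nlinarith [mul_nonneg (sub_nonneg.mpr h1) (by linarith : (0:ℝ) ≤ (e i - m) + ((N:ℝ)-1)*d)]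
    calc ∑ i, (e i - m) ^ 2
        ≤ ∑ i : Fin N, (((N:ℝ) - 1) * d ^ 2 - ((N:ℝ) - 2) * d * (e i - m)) :=
          Finset.sum_le_sum key
      _ = (N:ℝ) * (((N:ℝ) - 1) * d ^ 2) := by
          have h0 : ∑ i, (((N:ℝ) - 2) * d * (e i - m)) = 0 := by
            rw [← Finset.mul_sum, hsum0, mul_zero]
          rw [Finset.sum_sub_distrib, h0, Finset.sum_const, hcard, nsmul_eq_mul]; ring
  have hσ : Real.sqrt ((∑ i, (e i - m) ^ 2) / N) ≤ Real.sqrt ((N:ℝ) - 1) * d := by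
    have heq : Real.sqrt ((N:ℝ) - 1) * d = Real.sqrt (((N:ℝ) - 1) * d ^ 2) := by
      rw [Real.sqrt_mul (by linarith), Real.sqrt_sq hd0]
    rw [heq]
    apply Real.sqrt_le_sqrt
    rw [div_le_iff₀ hNpos]
    linarith
  have hsq : (0:ℝ) < Real.sqrt ((N:ℝ) - 1) := Real.sqrt_pos.mpr (by linarith)
  have : Real.sqrt ((∑ i, (e i - m) ^ 2) / N) / Real.sqrt ((N:ℝ) - 1) ≤ d := by
    rw [div_le_iff₀ hsq]
    calc Real.sqrt ((∑ i, (e i - m) ^ 2) / N) ≤ Real.sqrt ((N:ℝ) - 1) * d := hσ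
      _ = d * Real.sqrt ((N:ℝ) - 1) := by ring
  linarith

theorem stmt_15 (N : ℕ) (hN : 2 ≤ N) (e : Fin N → ℝ) :
    ((∑ j, e j) / N +
        Real.sqrt ((∑ i, (e i - (∑ j, e j) / N) ^ 2) / N) / Real.sqrt ((N : ℝ) - 1) ≤
      Finset.univ.sup' (Finset.univ_nonempty_iff.mpr ⟨⟨0, by omega⟩⟩) e) ∧
    ((∀ i j, e i = e j) →
      Real.sqrt ((∑ i, (e i - (∑ j, e j) / N) ^ 2) / N) = 0 ∧
      (∑ j, e j) / N +
          Real.sqrt ((∑ i, (e i - (∑ j, e j) / N) ^ 2) / N) / Real.sqrt ((N : ℝ) - 1) =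
        Finset.univ.sup' (Finset.univ_nonempty_iff.mpr ⟨⟨0, by omega⟩⟩) e) := by
  have hne : (Finset.univ : Finset (Fin N)).Nonempty :=
    Finset.univ_nonempty_iff.mpr ⟨⟨0, by omega⟩⟩
  have hNpos : (0:ℝ) < N := by positivity
  refine ⟨samuelson_aux N hN e _, fun hconst => ?_⟩
  have i0 : Fin N := ⟨0, by omega⟩
  have hmean : (∑ j, e j) / N = e i0 := by
    have : (∑ j, e j) = ∑ _j : Fin N, e i0 := Finset.sum_congr rfl (fun j _ => hconst j i0)
    rw [this, Finset.sum_const, Finset.card_univ, Fintype.card_fin, nsmul_eq_mul]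
    field_simp
  have hzero : Real.sqrt ((∑ i, (e i - (∑ j, e j) / N) ^ 2) / N) = 0 := by
    have : (∑ i, (e i - (∑ j, e j) / N) ^ 2) = 0 := by
      apply Finset.sum_eq_zero
      intro i _
      rw [hmean, hconst i i0]; ring
    rw [this]; simp
  refine ⟨hzero, ?_⟩
  rw [hzero, hmean]
  have hsup : Finset.univ.sup' hne e = e i0 := by
    apply le_antisymm
    · exact Finset.sup'_le hne e (fun j _ => le_of_eq (hconst j i0))
    · exact Finset.le_sup' e (Finset.mem_univ i0)
  rw [hsup]; ring
end
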